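/- For every nonnegative integer \(\alpha\), nonnegative integers k and m, real j (in particular nonnegative integer j), one has \(\sum_{i=0}^{\infty}\frac{(-1)^i}{\Gamma(i+j)}\binom{k+\alpha+3}{i}(-i)_k\,(m+\alpha+3)_i = (\alpha+4)_k\,(m+\alpha+3)_k\,\frac{(j-m-\alpha-3)_{\alpha+3}}{\Gamma(k+j+\alpha+3)}\), where the sum is finite since \(\binom{k+\alpha+3}{i}=0\) for \(i>k+\alpha+3\). -/
import Mathlib

open Finset

/-- Rising factorial (Pochhammer symbol) `(x)_k = x(x+1)⋯(x+k-1)`. -/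
noncomputable def poch (x : ℝ) (k : ℕ) : ℝ := (ascPochhammer ℝ k).eval x

/-- Generalized binomial coefficient `C(y, m) = (y-m+1)_m / m!` for real `y`. -/
noncomputable def gbinom (y : ℝ) (m : ℕ) : ℝ := poch (y - m + 1) m / m.factorial

/-- Generalized binomial coefficient with integer lower index, zero for negative index. -/
noncomputable def gbinomZ (y : ℝ) (m : ℤ) : ℝ := if 0 ≤ m then gbinom y m.toNat else 0

/-- Generalized Laguerre polynomial `L_n^{(a)}(x)`, defined for all real `a`. -/
noncomputable def Lag (n : ℕ) (a : ℝ) (x : ℝ) : ℝ :=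
  ∑ k ∈ range (n + 1),
    (-1 : ℝ) ^ k * poch (a + k + 1) (n - k) / (n - k).factorial * x ^ k / k.factorial

lemma poch_zero (x : ℝ) : poch x 0 = 1 := by simp [poch]

lemma poch_succ_left (x : ℝ) (n : ℕ) : poch x (n + 1) = x * poch (x + 1) n := by
  simp [poch, ascPochhammer_succ_left, Polynomial.eval_comp]

lemma poch_succ_right (x : ℝ) (n : ℕ) : poch x (n + 1) = poch x n * (x + n) :=
  ascPochhammer_succ_eval n x

lemma poch_add (x : ℝ) (a b : ℕ) : poch x (a + b) = poch x a * poch (x + a) b := by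
  induction b with
  | zero => simp [poch_zero]
  | succ b ih =>
      rw [← add_assoc, poch_succ_right, ih, poch_succ_right]
      push_cast
      ring

lemma inv_Gamma_step (z : ℝ) : 1 / Real.Gamma z = z / Real.Gamma (z + 1) := by
  by_cases hz : z = 0
  · simp [hz]
  · rw [Real.Gamma_add_one hz]
    by_cases hG : Real.Gamma z = 0
    · simp [hG]
    · field_simp

lemma poch_neg (k t : ℕ) :
    poch (-((k + t : ℕ) : ℝ)) k = (-1) ^ k * (k + t).factorial / t.factorial := by
  induction k with
  | zero =>
      simp only [Nat.zero_add, pow_zero, one_mul, poch_zero]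
      rw [div_self (Nat.cast_ne_zero.mpr t.factorial_ne_zero)]
  | succ k ih =>
      have h1 : (-(((k + 1 + t : ℕ) : ℝ))) + 1 = -((k + t : ℕ) : ℝ) := by push_cast; ring
      rw [poch_succ_left, h1, ih]
      have h2 : ((k + 1 + t).factorial : ℝ) = (k + 1 + t) * (k + t).factorial := by
        rw [show k + 1 + t = (k + t) + 1 from by omega, Nat.factorial_succ]
        push_cast; ring
      rw [h2]
      push_cast
      ring

lemma poch_factorial (s k : ℕ) :
    poch ((s : ℝ) + 1) k * (s.factorial : ℝ) = ((s + k).factorial : ℝ) := by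
  induction k with
  | zero => simp [poch_zero]
  | succ k ih =>
      rw [poch_succ_right, show s + (k + 1) = (s + k) + 1 from by omega, Nat.factorial_succ]
      push_cast
      nlinarith [ih]

/-- Key identity: `∑ (-1)^t C(n,t) (M)_t / Γ(c+t) = (c-M)_n / Γ(c+n)`. -/
lemma key_sum (n : ℕ) : ∀ M c : ℝ,
    ∑ t ∈ range (n + 1), (-1 : ℝ) ^ t * (n.choose t : ℝ) * poch M t / Real.Gamma (c + t)
      = poch (c - M) n / Real.Gamma (c + n) := by
  induction n with
  | zero => intro M c; simp [poch_zero]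
  | succ n ih =>
      intro M c
      rw [Finset.sum_range_succ']
      have hsplit : ∀ t ∈ range (n + 1),
          (-1 : ℝ) ^ (t + 1) * (((n + 1).choose (t + 1) : ℕ) : ℝ) * poch M (t + 1)
              / Real.Gamma (c + ((t + 1 : ℕ) : ℝ))
            = (-1 : ℝ) ^ (t + 1) * ((n.choose (t + 1) : ℕ) : ℝ) * poch M (t + 1)
                / Real.Gamma (c + ((t + 1 : ℕ) : ℝ))
              - (-1 : ℝ) ^ t * ((n.choose t : ℕ) : ℝ) * (M * poch (M + 1) t)
                / Real.Gamma ((c + 1) + (t : ℝ)) := by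
        intro t _
        have hc : (((n + 1).choose (t + 1) : ℕ) : ℝ)
            = (n.choose t : ℝ) + (n.choose (t + 1) : ℝ) := by
          rw [Nat.choose_succ_succ]; push_cast; ring
        have harg : c + ((t + 1 : ℕ) : ℝ) = (c + 1) + (t : ℝ) := by push_cast; ring
        rw [hc, harg, show t + 1 = t + 1 from rfl, poch_succ_left]
        ring
      rw [Finset.sum_congr rfl hsplit, Finset.sum_sub_distrib]
      have h2 : ∑ t ∈ range (n + 1),
          (-1 : ℝ) ^ t * ((n.choose t : ℕ) : ℝ) * (M * poch (M + 1) t)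
            / Real.Gamma ((c + 1) + (t : ℝ))
          = M * (poch (c - M) n / Real.Gamma ((c + 1) + (n : ℝ))) := by
        calc ∑ t ∈ range (n + 1),
              (-1 : ℝ) ^ t * ((n.choose t : ℕ) : ℝ) * (M * poch (M + 1) t)
                / Real.Gamma ((c + 1) + (t : ℝ))
            = M * ∑ t ∈ range (n + 1),
                (-1 : ℝ) ^ t * ((n.choose t : ℕ) : ℝ) * poch (M + 1) t
                  / Real.Gamma ((c + 1) + (t : ℝ)) := by
              rw [Finset.mul_sum]
              exact Finset.sum_congr rfl fun t _ => by ring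
          _ = M * (poch ((c + 1) - (M + 1)) n / Real.Gamma ((c + 1) + (n : ℝ))) := by
              rw [ih]
          _ = M * (poch (c - M) n / Real.Gamma ((c + 1) + (n : ℝ))) := by
              rw [show (c + 1) - (M + 1) = c - M from by ring]
      rw [h2]
      have h1 : (∑ t ∈ range (n + 1),
          (-1 : ℝ) ^ (t + 1) * ((n.choose (t + 1) : ℕ) : ℝ) * poch M (t + 1)
            / Real.Gamma (c + ((t + 1 : ℕ) : ℝ)))
          + (-1 : ℝ) ^ 0 * (((n + 1).choose 0 : ℕ) : ℝ) * poch M 0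
              / Real.Gamma (c + ((0 : ℕ) : ℝ))
          = poch (c - M) n / Real.Gamma (c + (n : ℝ)) := by
        have e0 : (-1 : ℝ) ^ 0 * (((n + 1).choose 0 : ℕ) : ℝ) * poch M 0
              / Real.Gamma (c + ((0 : ℕ) : ℝ))
            = (-1 : ℝ) ^ 0 * ((n.choose 0 : ℕ) : ℝ) * poch M 0
              / Real.Gamma (c + ((0 : ℕ) : ℝ)) := by simp
        have hS : (∑ t ∈ range (n + 1),
              (-1 : ℝ) ^ (t + 1) * ((n.choose (t + 1) : ℕ) : ℝ) * poch M (t + 1)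
                / Real.Gamma (c + ((t + 1 : ℕ) : ℝ)))
            + (-1 : ℝ) ^ 0 * ((n.choose 0 : ℕ) : ℝ) * poch M 0
                / Real.Gamma (c + ((0 : ℕ) : ℝ))
            = ∑ t ∈ range (n + 2),
                (-1 : ℝ) ^ t * ((n.choose t : ℕ) : ℝ) * poch M t
                  / Real.Gamma (c + (t : ℝ)) :=
          (Finset.sum_range_succ'
            (fun t => (-1 : ℝ) ^ t * ((n.choose t : ℕ) : ℝ) * poch M t
              / Real.Gamma (c + (t : ℝ))) (n + 1)).symm
        rw [e0, hS, Finset.sum_range_succ]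
        simp only [Nat.choose_succ_self, Nat.cast_zero]
        rw [← ih M c]
        ring
      rw [sub_add_eq_add_sub, h1]
      have e1 : (c + 1) + (n : ℝ) = (c + (n : ℝ)) + 1 := by ring
      have e2 : c + (((n + 1) : ℕ) : ℝ) = (c + (n : ℝ)) + 1 := by push_cast; ring
      rw [e1, e2, poch_succ_right,
        show poch (c - M) n / Real.Gamma (c + (n : ℝ))
            = poch (c - M) n * (1 / Real.Gamma (c + (n : ℝ))) from by ring,
        inv_Gamma_step]
      ring

theorem S_sum_formula (α k m j : ℕ) :
    ∑ i ∈ range (k + α + 4),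
        (-1 : ℝ) ^ i / Real.Gamma ((i : ℝ) + j) * ((k + α + 3).choose i : ℝ)
          * poch (-(i : ℝ)) k * poch ((m : ℝ) + α + 3) i
      = poch ((α : ℝ) + 4) k * poch ((m : ℝ) + α + 3) k
          * poch ((j : ℝ) - m - α - 3) (α + 3) / Real.Gamma ((k : ℝ) + j + α + 3) := by
  set M' : ℝ := (m : ℝ) + α + 3 with hM'
  set c : ℝ := (k : ℝ) + j with hc
  rw [show k + α + 4 = k + (α + 4) from by omega, Finset.sum_range_add]
  have hz : (∑ i ∈ range k,
      (-1 : ℝ) ^ i / Real.Gamma ((i : ℝ) + j) * ((k + α + 3).choose i : ℝ)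
        * poch (-(i : ℝ)) k * poch M' i) = 0 := by
    refine Finset.sum_eq_zero fun i hi => ?_
    have h0 : poch (-(i : ℝ)) k = 0 :=
      ascPochhammer_eval_neg_coe_nat_of_lt (mem_range.mp hi)
    rw [h0]; ring
  rw [hz, zero_add]
  have hterm : ∀ t ∈ range (α + 4),
      (-1 : ℝ) ^ (k + t) / Real.Gamma (((k + t : ℕ) : ℝ) + j)
          * ((k + α + 3).choose (k + t) : ℝ) * poch (-((k + t : ℕ) : ℝ)) k
          * poch M' (k + t)
        = poch ((α : ℝ) + 4) k * poch M' k
            * ((-1 : ℝ) ^ t * (((α + 3).choose t : ℕ) : ℝ) * poch (M' + k) t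
                / Real.Gamma (c + (t : ℝ))) := by
    intro t ht
    have htle : t ≤ α + 3 := by have := mem_range.mp ht; omega
    have ht0 : ((t.factorial : ℕ) : ℝ) ≠ 0 := Nat.cast_ne_zero.mpr (Nat.factorial_ne_zero _)
    have hne : (((α + 3 - t).factorial : ℕ) : ℝ) ≠ 0 :=
      Nat.cast_ne_zero.mpr (Nat.factorial_ne_zero _)
    have hA : ((k + α + 3).choose (k + t) : ℝ) * ((k + t).factorial : ℝ)
        * ((α + 3 - t).factorial : ℝ) = ((k + α + 3).factorial : ℝ) := by
      have h := Nat.choose_mul_factorial_mul_factorial (show k + t ≤ k + α + 3 by omega)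
      rw [show (k + α + 3) - (k + t) = α + 3 - t from by omega] at h
      exact_mod_cast h
    have hB : (((α + 3).choose t : ℕ) : ℝ) * (t.factorial : ℝ)
        * ((α + 3 - t).factorial : ℝ) = ((α + 3).factorial : ℝ) := by
      have h := Nat.choose_mul_factorial_mul_factorial htle
      exact_mod_cast h
    have hC : poch ((α : ℝ) + 4) k * ((α + 3).factorial : ℝ)
        = ((k + α + 3).factorial : ℝ) := by
      have h := poch_factorial (α + 3) k
      rw [show (((α + 3 : ℕ)) : ℝ) + 1 = (α : ℝ) + 4 from by push_cast; ring,
        show (α + 3) + k = k + α + 3 from by omega] at h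
      exact h
    have hcomb : ((k + α + 3).choose (k + t) : ℝ) * ((k + t).factorial : ℝ)
        / (t.factorial : ℝ)
        = poch ((α : ℝ) + 4) k * (((α + 3).choose t : ℕ) : ℝ) := by
      rw [div_eq_iff ht0]
      apply mul_right_cancel₀ hne
      rw [hA, ← hC, ← hB]
      ring
    have hsign : (-1 : ℝ) ^ (k + t) * (-1 : ℝ) ^ k = (-1 : ℝ) ^ t := by
      rw [← pow_add, show k + t + k = 2 * k + t from by omega, pow_add, pow_mul,
        neg_one_sq, one_pow, one_mul]
    have hGamma : Real.Gamma (((k + t : ℕ) : ℝ) + j) = Real.Gamma (c + (t : ℝ)) := by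
      congr 1; rw [hc]; push_cast; ring
    rw [hGamma, poch_neg, poch_add]
    linear_combination
      ((Real.Gamma (c + (t : ℝ)))⁻¹ * poch M' k * poch (M' + k) t
          * ((k + α + 3).choose (k + t) : ℝ) * ((k + t).factorial : ℝ)
          / (t.factorial : ℝ)) * hsign
      + ((Real.Gamma (c + (t : ℝ)))⁻¹ * poch M' k * poch (M' + k) t * (-1 : ℝ) ^ t) * hcomb
  rw [Finset.sum_congr rfl hterm, ← Finset.mul_sum]
  have hk := key_sum (α + 3) (M' + k) c
  rw [show α + 4 = (α + 3) + 1 from rfl, hk]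
  have e1 : c - (M' + k) = (j : ℝ) - m - α - 3 := by rw [hc, hM']; ring
  have e2 : Real.Gamma (c + (((α + 3) : ℕ) : ℝ)) = Real.Gamma ((k : ℝ) + j + α + 3) := by
    congr 1; rw [hc]; push_cast; ring
  rw [e1, e2]
  ring
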